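/- Let f(x) = Σ_{ℓ=1}^{m1} h_ℓ(Σ_{i=1}^{m0} b_{iℓ} g_i(a_i^T x)) be a two-hidden-layer network as in the context, and let ε > 0. Then sup over x in the closed Euclidean unit ball B_1 of R^{m0} of the Frobenius norm ‖∇²f(x) − Δ_ε²f(x)‖_F is at most C_Δ · ε · m1 · m0^{3/2}, where C_Δ := 16 · max{η₂κ₁κ₂, κ₁³η₃, η₁κ₃}. -/

import Mathlib

namespace FDH
variable {m0 m1 : ℕ}

def ew (w : Fin m0) : Fin m0 → ℝ := Pi.single w 1

lemma ew_apply (w : Fin m0) : ew w = (Pi.single w 1 : Fin m0 → ℝ) := rfl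

def lin (a : Fin m0 → Fin m0 → ℝ) (p : Fin m0) (y : Fin m0 → ℝ) : ℝ := ∑ k, a p k * y k

lemma lin_add_smul (a : Fin m0 → Fin m0 → ℝ) (p : Fin m0) (y v : Fin m0 → ℝ) (t : ℝ) :
    lin a p (y + t • v) = lin a p y + lin a p v * t := by
  simp only [lin, Pi.add_apply, Pi.smul_apply, smul_eq_mul, mul_add, Finset.sum_add_distrib,
    Finset.sum_mul, Finset.mul_sum]
  congr 1
  exact Finset.sum_congr rfl fun k _ => by ring

lemma lin_single (a : Fin m0 → Fin m0 → ℝ) (p w : Fin m0) :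
    lin a p (ew w) = a p w := by
  simp [lin, ew, Pi.single_apply, mul_ite, Finset.sum_ite_eq']

def ws (a : Fin m0 → Fin m0 → ℝ) (b : Fin m1 → Fin m0 → ℝ) (G : Fin m0 → ℝ → ℝ)
    (c : Fin m0 → ℝ) (ℓ : Fin m1) (y : Fin m0 → ℝ) : ℝ :=
  ∑ p, b ℓ p * G p (lin a p y) * c p

lemma ws_congr_c {a : Fin m0 → Fin m0 → ℝ} {b : Fin m1 → Fin m0 → ℝ} {G : Fin m0 → ℝ → ℝ}
    {c c' : Fin m0 → ℝ} (hcc : ∀ p, c p = c' p) (ℓ : Fin m1) (y : Fin m0 → ℝ) :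
    ws a b G c ℓ y = ws a b G c' ℓ y := by
  unfold ws; exact Finset.sum_congr rfl fun p _ => by rw [hcc]

lemma hasDerivAt_lin_line (a : Fin m0 → Fin m0 → ℝ) (p : Fin m0) (y v : Fin m0 → ℝ) (t : ℝ) :
    HasDerivAt (fun t : ℝ => lin a p (y + t • v)) (lin a p v) t := by
  have h : HasDerivAt (fun t : ℝ => lin a p y + lin a p v * t) (lin a p v) t := by
    simpa using ((hasDerivAt_id t).const_mul (lin a p v)).const_add (lin a p y)
  exact h.congr_of_eventuallyEq (Filter.Eventually.of_forall fun s => lin_add_smul a p y v s)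

lemma hasDerivAt_ws_line (a : Fin m0 → Fin m0 → ℝ) (b : Fin m1 → Fin m0 → ℝ)
    (G G' : Fin m0 → ℝ → ℝ) (hG : ∀ p s, HasDerivAt (G p) (G' p s) s)
    (c : Fin m0 → ℝ) (ℓ : Fin m1) (y v : Fin m0 → ℝ) (t : ℝ) :
    HasDerivAt (fun t : ℝ => ws a b G c ℓ (y + t • v))
      (ws a b G' (fun p => lin a p v * c p) ℓ (y + t • v)) t := by
  unfold ws
  apply HasDerivAt.fun_sum
  intro p _
  have h1 : HasDerivAt (fun t : ℝ => G p (lin a p (y + t • v)))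
      (G' p (lin a p (y + t • v)) * lin a p v) t :=
    (hG p _).comp t (hasDerivAt_lin_line a p y v t)
  have h2 := (h1.const_mul (b ℓ p)).mul_const (c p)
  refine h2.congr_deriv ?_
  ring

/-- the inner layer `z_ℓ`. -/
noncomputable def zf (a : Fin m0 → Fin m0 → ℝ) (b : Fin m1 → Fin m0 → ℝ) (g : Fin m0 → ℝ → ℝ)
    (ℓ : Fin m1) (y : Fin m0 → ℝ) : ℝ :=
  ∑ p, b ℓ p * g p (lin a p y)

noncomputable def Pf (a : Fin m0 → Fin m0 → ℝ) (b : Fin m1 → Fin m0 → ℝ) (g : Fin m0 → ℝ → ℝ)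
    (i : Fin m0) (ℓ : Fin m1) (y : Fin m0 → ℝ) : ℝ :=
  ws a b (fun p => deriv (g p)) (fun p => a p i) ℓ y

noncomputable def Qf (a : Fin m0 → Fin m0 → ℝ) (b : Fin m1 → Fin m0 → ℝ) (g : Fin m0 → ℝ → ℝ)
    (i j : Fin m0) (ℓ : Fin m1) (y : Fin m0 → ℝ) : ℝ :=
  ws a b (fun p => deriv (deriv (g p))) (fun p => a p i * a p j) ℓ y

noncomputable def Rf (a : Fin m0 → Fin m0 → ℝ) (b : Fin m1 → Fin m0 → ℝ) (g : Fin m0 → ℝ → ℝ)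
    (i j w : Fin m0) (ℓ : Fin m1) (y : Fin m0 → ℝ) : ℝ :=
  ws a b (fun p => deriv (deriv (deriv (g p)))) (fun p => a p w * (a p i * a p j)) ℓ y

noncomputable def Df (a : Fin m0 → Fin m0 → ℝ) (b : Fin m1 → Fin m0 → ℝ) (g : Fin m0 → ℝ → ℝ)
    (h : Fin m1 → ℝ → ℝ) (i : Fin m0) (y : Fin m0 → ℝ) : ℝ :=
  ∑ ℓ, deriv (h ℓ) (zf a b g ℓ y) * Pf a b g i ℓ y

noncomputable def Hf (a : Fin m0 → Fin m0 → ℝ) (b : Fin m1 → Fin m0 → ℝ) (g : Fin m0 → ℝ → ℝ)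
    (h : Fin m1 → ℝ → ℝ) (i j : Fin m0) (y : Fin m0 → ℝ) : ℝ :=
  ∑ ℓ, (deriv (deriv (h ℓ)) (zf a b g ℓ y) * Pf a b g i ℓ y * Pf a b g j ℓ y
    + deriv (h ℓ) (zf a b g ℓ y) * Qf a b g i j ℓ y)

noncomputable def Tf (a : Fin m0 → Fin m0 → ℝ) (b : Fin m1 → Fin m0 → ℝ) (g : Fin m0 → ℝ → ℝ)
    (h : Fin m1 → ℝ → ℝ) (i j w : Fin m0) (y : Fin m0 → ℝ) : ℝ :=
  ∑ ℓ, (deriv (deriv (deriv (h ℓ))) (zf a b g ℓ y) * Pf a b g w ℓ y * Pf a b g i ℓ y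
          * Pf a b g j ℓ y
    + deriv (deriv (h ℓ)) (zf a b g ℓ y)
        * (Qf a b g w i ℓ y * Pf a b g j ℓ y + Pf a b g i ℓ y * Qf a b g w j ℓ y)
    + deriv (deriv (h ℓ)) (zf a b g ℓ y) * Pf a b g w ℓ y * Qf a b g i j ℓ y
    + deriv (h ℓ) (zf a b g ℓ y) * Rf a b g i j w ℓ y)

section derivs

variable (a : Fin m0 → Fin m0 → ℝ) (b : Fin m1 → Fin m0 → ℝ)
  (g : Fin m0 → ℝ → ℝ) (h : Fin m1 → ℝ → ℝ)
  (hg : ∀ p, ContDiff ℝ 3 (g p)) (hh : ∀ ℓ, ContDiff ℝ 3 (h ℓ))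

lemma derivs3 (φ : ℝ → ℝ) (hφ : ContDiff ℝ 3 φ) :
    Differentiable ℝ φ ∧ Differentiable ℝ (deriv φ) ∧ Differentiable ℝ (deriv (deriv φ)) := by
  have h3 : ContDiff ℝ ((2 : WithTop ℕ∞) + 1) φ := by norm_num; exact hφ
  obtain ⟨hd1, -, hc2⟩ := contDiff_succ_iff_deriv.mp h3
  have h2 : ContDiff ℝ ((1 : WithTop ℕ∞) + 1) (deriv φ) := by norm_num; exact hc2
  obtain ⟨hd2, -, hc1⟩ := contDiff_succ_iff_deriv.mp h2
  have h1 : ContDiff ℝ ((0 : WithTop ℕ∞) + 1) (deriv (deriv φ)) := by norm_num; exact hc1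
  obtain ⟨hd3, -, -⟩ := contDiff_succ_iff_deriv.mp h1
  exact ⟨hd1, hd2, hd3⟩

include hg in
lemma hasDerivAt_zf_line (ℓ : Fin m1) (y : Fin m0 → ℝ) (w : Fin m0) (t : ℝ) :
    HasDerivAt (fun t : ℝ => zf a b g ℓ (y + t • ew w))
      (Pf a b g w ℓ (y + t • ew w)) t := by
  unfold zf Pf ws
  apply HasDerivAt.fun_sum
  intro p _
  have hgd : HasDerivAt (g p) (deriv (g p) (lin a p (y + t • ew w)))
      (lin a p (y + t • ew w)) :=
    ((derivs3 (g p) (hg p)).1 _).hasDerivAt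
  have h1 := (hgd.comp t (hasDerivAt_lin_line a p y (ew w) t)).const_mul (b ℓ p)
  refine h1.congr_deriv ?_
  rw [lin_single]
  ring

include hg in
lemma hasDerivAt_Pf_line (i : Fin m0) (ℓ : Fin m1) (y : Fin m0 → ℝ) (w : Fin m0) (t : ℝ) :
    HasDerivAt (fun t : ℝ => Pf a b g i ℓ (y + t • ew w))
      (Qf a b g w i ℓ (y + t • ew w)) t := by
  have := hasDerivAt_ws_line a b (fun p => deriv (g p)) (fun p => deriv (deriv (g p)))
    (fun p s => ((derivs3 (g p) (hg p)).2.1 s).hasDerivAt) (fun p => a p i) ℓ y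
    (ew w) t
  unfold Pf Qf
  convert this using 1
  refine ws_congr_c (fun p => ?_) ℓ _
  rw [lin_single]

include hg in
lemma hasDerivAt_Qf_line (i j : Fin m0) (ℓ : Fin m1) (y : Fin m0 → ℝ) (w : Fin m0) (t : ℝ) :
    HasDerivAt (fun t : ℝ => Qf a b g i j ℓ (y + t • ew w))
      (Rf a b g i j w ℓ (y + t • ew w)) t := by
  have := hasDerivAt_ws_line a b (fun p => deriv (deriv (g p)))
    (fun p => deriv (deriv (deriv (g p))))
    (fun p s => ((derivs3 (g p) (hg p)).2.2 s).hasDerivAt) (fun p => a p i * a p j) ℓ y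
    (ew w) t
  unfold Qf Rf
  convert this using 1
  refine ws_congr_c (fun p => ?_) ℓ _
  rw [lin_single]

include hg hh in
lemma hasDerivAt_f_line (y : Fin m0 → ℝ) (w : Fin m0) (t : ℝ) :
    HasDerivAt (fun t : ℝ => ∑ ℓ, h ℓ (zf a b g ℓ (y + t • ew w)))
      (Df a b g h w (y + t • ew w)) t := by
  unfold Df
  apply HasDerivAt.fun_sum
  intro ℓ _
  have hhd : HasDerivAt (h ℓ) (deriv (h ℓ) (zf a b g ℓ (y + t • ew w)))
      (zf a b g ℓ (y + t • ew w)) := ((derivs3 (h ℓ) (hh ℓ)).1 _).hasDerivAt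
  exact hhd.comp t (hasDerivAt_zf_line a b g hg ℓ y w t)

include hg hh in
lemma hasDerivAt_Df_line (i : Fin m0) (y : Fin m0 → ℝ) (w : Fin m0) (t : ℝ) :
    HasDerivAt (fun t : ℝ => Df a b g h i (y + t • ew w))
      (Hf a b g h w i (y + t • ew w)) t := by
  unfold Df Hf
  apply HasDerivAt.fun_sum
  intro ℓ _
  have hz := hasDerivAt_zf_line a b g hg ℓ y w t
  have hh1 : HasDerivAt (fun t : ℝ => deriv (h ℓ) (zf a b g ℓ (y + t • ew w)))
      (deriv (deriv (h ℓ)) (zf a b g ℓ (y + t • ew w))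
        * Pf a b g w ℓ (y + t • ew w)) t :=
    (((derivs3 (h ℓ) (hh ℓ)).2.1 _).hasDerivAt).comp t hz
  exact hh1.mul (hasDerivAt_Pf_line a b g hg i ℓ y w t)

include hg hh in
lemma hasDerivAt_Hf_line (i j : Fin m0) (y : Fin m0 → ℝ) (w : Fin m0) (t : ℝ) :
    HasDerivAt (fun t : ℝ => Hf a b g h i j (y + t • ew w))
      (Tf a b g h i j w (y + t • ew w)) t := by
  unfold Hf Tf
  apply HasDerivAt.fun_sum
  intro ℓ _
  have hz := hasDerivAt_zf_line a b g hg ℓ y w t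
  have hh1 : HasDerivAt (fun t : ℝ => deriv (h ℓ) (zf a b g ℓ (y + t • ew w)))
      (deriv (deriv (h ℓ)) (zf a b g ℓ (y + t • ew w))
        * Pf a b g w ℓ (y + t • ew w)) t :=
    (((derivs3 (h ℓ) (hh ℓ)).2.1 _).hasDerivAt).comp t hz
  have hh2 : HasDerivAt (fun t : ℝ => deriv (deriv (h ℓ)) (zf a b g ℓ (y + t • ew w)))
      (deriv (deriv (deriv (h ℓ))) (zf a b g ℓ (y + t • ew w))
        * Pf a b g w ℓ (y + t • ew w)) t :=
    (((derivs3 (h ℓ) (hh ℓ)).2.2 _).hasDerivAt).comp t hz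
  have hPi := hasDerivAt_Pf_line a b g hg i ℓ y w t
  have hPj := hasDerivAt_Pf_line a b g hg j ℓ y w t
  have hQ := hasDerivAt_Qf_line a b g hg i j ℓ y w t
  have term1 := (hh2.mul hPi).mul hPj
  have term2 := hh1.mul hQ
  refine (term1.add term2).congr_deriv ?_
  simp only [Pi.mul_apply]
  ring

end derivs

-- ### fderiv layer
noncomputable def linC (a : Fin m0 → Fin m0 → ℝ) (p : Fin m0) : (Fin m0 → ℝ) →L[ℝ] ℝ :=
  ∑ k, a p k • (ContinuousLinearMap.proj k : ((Fin m0 → ℝ)) →L[ℝ] ℝ)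

lemma linC_apply (a : Fin m0 → Fin m0 → ℝ) (p : Fin m0) (y : Fin m0 → ℝ) :
    linC a p y = lin a p y := by
  simp [linC, lin, ContinuousLinearMap.sum_apply, smul_eq_mul]

lemma linC_single (a : Fin m0 → Fin m0 → ℝ) (p w : Fin m0) :
    linC a p (ew w) = a p w := by rw [linC_apply, lin_single]

lemma hasFDerivAt_lin (a : Fin m0 → Fin m0 → ℝ) (p : Fin m0) (y : Fin m0 → ℝ) :
    HasFDerivAt (fun y => lin a p y) (linC a p) y := by
  have h := (linC a p).hasFDerivAt (x := y)
  exact h.congr_of_eventuallyEq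
    (Filter.Eventually.of_forall fun y => (linC_apply a p y).symm)

noncomputable def Zc (a : Fin m0 → Fin m0 → ℝ) (b : Fin m1 → Fin m0 → ℝ) (g : Fin m0 → ℝ → ℝ)
    (ℓ : Fin m1) (y : Fin m0 → ℝ) : (Fin m0 → ℝ) →L[ℝ] ℝ :=
  ∑ p, (b ℓ p * deriv (g p) (lin a p y)) • linC a p

lemma Zc_single (a : Fin m0 → Fin m0 → ℝ) (b : Fin m1 → Fin m0 → ℝ) (g : Fin m0 → ℝ → ℝ)
    (ℓ : Fin m1) (y : Fin m0 → ℝ) (i : Fin m0) :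
    Zc a b g ℓ y (ew i) = Pf a b g i ℓ y := by
  simp [Zc, Pf, ws, ContinuousLinearMap.sum_apply, linC_single, smul_eq_mul, mul_assoc]

section fderivs
variable (a : Fin m0 → Fin m0 → ℝ) (b : Fin m1 → Fin m0 → ℝ)
  (g : Fin m0 → ℝ → ℝ) (h : Fin m1 → ℝ → ℝ)
  (hg : ∀ p, ContDiff ℝ 3 (g p)) (hh : ∀ ℓ, ContDiff ℝ 3 (h ℓ))

include hg in
lemma hasFDerivAt_zf (ℓ : Fin m1) (y : Fin m0 → ℝ) :
    HasFDerivAt (zf a b g ℓ) (Zc a b g ℓ y) y := by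
  unfold zf Zc
  apply HasFDerivAt.fun_sum
  intro p _
  have h1 : HasFDerivAt (fun y => g p (lin a p y))
      (deriv (g p) (lin a p y) • linC a p) y :=
    (((derivs3 _ (hg p)).1 _).hasDerivAt).comp_hasFDerivAt y (hasFDerivAt_lin a p y)
  have h2 := h1.const_mul (b ℓ p)
  refine h2.congr_fderiv ?_
  rw [smul_smul]

noncomputable def D1 (y : Fin m0 → ℝ) : (Fin m0 → ℝ) →L[ℝ] ℝ :=
  ∑ ℓ, ∑ p, (deriv (h ℓ) (zf a b g ℓ y) * (b ℓ p * deriv (g p) (lin a p y))) • linC a p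

include hg hh in
lemma hasFDerivAt_f (y : Fin m0 → ℝ) :
    HasFDerivAt (fun y => ∑ ℓ, h ℓ (zf a b g ℓ y)) (D1 a b g h y) y := by
  unfold D1
  apply HasFDerivAt.fun_sum
  intro ℓ _
  have h1 : HasFDerivAt (fun y => h ℓ (zf a b g ℓ y))
      (deriv (h ℓ) (zf a b g ℓ y) • Zc a b g ℓ y) y :=
    (((derivs3 _ (hh ℓ)).1 _).hasDerivAt).comp_hasFDerivAt y (hasFDerivAt_zf a b g hg ℓ y)
  refine h1.congr_fderiv ?_
  unfold Zc
  rw [Finset.smul_sum]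
  exact Finset.sum_congr rfl fun p _ => by rw [smul_smul]

noncomputable def cD (ℓ : Fin m1) (p : Fin m0) (x : Fin m0 → ℝ) : (Fin m0 → ℝ) →L[ℝ] ℝ :=
  deriv (h ℓ) (zf a b g ℓ x) • (b ℓ p • (deriv (deriv (g p)) (lin a p x) • linC a p))
  + (b ℓ p * deriv (g p) (lin a p x)) •
      (deriv (deriv (h ℓ)) (zf a b g ℓ x) • Zc a b g ℓ x)

include hg hh in
lemma hasFDerivAt_coeff (ℓ : Fin m1) (p : Fin m0) (x : Fin m0 → ℝ) :
    HasFDerivAt (fun y => deriv (h ℓ) (zf a b g ℓ y) * (b ℓ p * deriv (g p) (lin a p y)))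
      (cD a b g h ℓ p x) x := by
  have hc : HasFDerivAt (fun y => deriv (h ℓ) (zf a b g ℓ y))
      (deriv (deriv (h ℓ)) (zf a b g ℓ x) • Zc a b g ℓ x) x :=
    (((derivs3 _ (hh ℓ)).2.1 _).hasDerivAt).comp_hasFDerivAt x (hasFDerivAt_zf a b g hg ℓ x)
  have hd0 : HasFDerivAt (fun y => deriv (g p) (lin a p y))
      (deriv (deriv (g p)) (lin a p x) • linC a p) x :=
    (((derivs3 _ (hg p)).2.1 _).hasDerivAt).comp_hasFDerivAt x (hasFDerivAt_lin a p x)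
  have hd := hd0.const_mul (b ℓ p)
  exact hc.mul hd

noncomputable def D2 (x : Fin m0 → ℝ) : (Fin m0 → ℝ) →L[ℝ] ((Fin m0 → ℝ) →L[ℝ] ℝ) :=
  ∑ ℓ, ∑ p, (cD a b g h ℓ p x).smulRight (linC a p)

include hg hh in
lemma hasFDerivAt_D1 (x : Fin m0 → ℝ) :
    HasFDerivAt (fun y => D1 a b g h y) (D2 a b g h x) x := by
  unfold D1 D2
  apply HasFDerivAt.fun_sum
  intro ℓ _
  apply HasFDerivAt.fun_sum
  intro p _
  exact (hasFDerivAt_coeff a b g h hg hh ℓ p x).smul_const (linC a p)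

lemma D2_apply (x : Fin m0 → ℝ) (i j : Fin m0) :
    D2 a b g h x (ew i) (ew j) = Hf a b g h i j x := by
  have expand : D2 a b g h x (ew i) (ew j)
      = ∑ ℓ, ∑ p, (deriv (h ℓ) (zf a b g ℓ x) * (b ℓ p * (deriv (deriv (g p)) (lin a p x) * a p i))
          + (b ℓ p * deriv (g p) (lin a p x))
            * (deriv (deriv (h ℓ)) (zf a b g ℓ x) * Pf a b g i ℓ x)) * a p j := by
    simp [D2, cD, ContinuousLinearMap.sum_apply, ContinuousLinearMap.smulRight_apply,
      ContinuousLinearMap.coe_sum', Finset.sum_apply, ContinuousLinearMap.add_apply,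
      ContinuousLinearMap.smul_apply, smul_eq_mul, linC_single, Zc_single,
      Finset.sum_mul]
  rw [expand]
  unfold Hf
  apply Finset.sum_congr rfl
  intro ℓ _
  conv_rhs => rw [show Pf a b g j ℓ x = ∑ p, b ℓ p * deriv (g p) (lin a p x) * a p j from rfl,
    show Qf a b g i j ℓ x
      = ∑ p, b ℓ p * deriv (deriv (g p)) (lin a p x) * (a p i * a p j) from rfl,
    Finset.mul_sum, Finset.mul_sum, ← Finset.sum_add_distrib]
  apply Finset.sum_congr rfl
  intro p _
  ring

end fderivs

lemma Qf_symm (a : Fin m0 → Fin m0 → ℝ) (b : Fin m1 → Fin m0 → ℝ) (g : Fin m0 → ℝ → ℝ)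
    (i j : Fin m0) (ℓ : Fin m1) (y : Fin m0 → ℝ) :
    Qf a b g i j ℓ y = Qf a b g j i ℓ y :=
  ws_congr_c (fun p => mul_comm _ _) ℓ y

lemma Hf_symm (a : Fin m0 → Fin m0 → ℝ) (b : Fin m1 → Fin m0 → ℝ) (g : Fin m0 → ℝ → ℝ)
    (h : Fin m1 → ℝ → ℝ) (i j : Fin m0) (y : Fin m0 → ℝ) :
    Hf a b g h i j y = Hf a b g h j i y := by
  unfold Hf
  apply Finset.sum_congr rfl
  intro ℓ _
  rw [Qf_symm]
  ring

lemma iteratedDeriv_two (φ : ℝ → ℝ) : iteratedDeriv 2 φ = deriv (deriv φ) := by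
  rw [show (2:ℕ) = 1+1 from rfl, iteratedDeriv_succ, iteratedDeriv_one]

lemma iteratedDeriv_three (φ : ℝ → ℝ) : iteratedDeriv 3 φ = deriv (deriv (deriv φ)) := by
  rw [show (3:ℕ) = 2+1 from rfl, iteratedDeriv_succ, iteratedDeriv_two]

lemma abs_mul_le_of_le {x y bx by' : ℝ} (h1 : |x| ≤ bx) (h2 : |y| ≤ by') :
    |x * y| ≤ bx * by' := by
  rw [abs_mul]
  exact mul_le_mul h1 h2 (abs_nonneg _) ((abs_nonneg _).trans h1)


lemma sum_mul_le_sum_mul {ι : Type*} (s : Finset ι) (x y : ι → ℝ)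
    (hx : ∀ p ∈ s, 0 ≤ x p) (hy : ∀ p ∈ s, 0 ≤ y p) :
    ∑ p ∈ s, x p * y p ≤ (∑ p ∈ s, x p) * (∑ p ∈ s, y p) := by
  calc ∑ p ∈ s, x p * y p ≤ ∑ p ∈ s, x p * (∑ q ∈ s, y q) := by
        apply Finset.sum_le_sum
        intro p hp
        exact mul_le_mul_of_nonneg_left (Finset.single_le_sum hy hp) (hx p hp)
    _ = (∑ p ∈ s, x p) * (∑ p ∈ s, y p) := by rw [← Finset.sum_mul]

lemma abs_le_mul_sqrt {W M S : ℝ} (hM : 0 ≤ M) (hS : 0 ≤ S) (hsq : W ^ 2 ≤ M ^ 2 * S) :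
    |W| ≤ M * Real.sqrt S := by
  have h1 : |W| = Real.sqrt (W ^ 2) := (Real.sqrt_sq_eq_abs W).symm
  rw [h1]
  calc Real.sqrt (W ^ 2) ≤ Real.sqrt (M ^ 2 * S) := Real.sqrt_le_sqrt hsq
    _ = M * Real.sqrt S := by
        rw [Real.sqrt_mul (sq_nonneg M), Real.sqrt_sq hM]

/-- Cauchy–Schwarz style bound for a weighted sum. -/
lemma abs_wsum_le {n : ℕ} (b : Fin n → ℝ) (u c : Fin n → ℝ) (M : ℝ)
    (hb : ∑ p, b p ^ 2 = 1) (hM : 0 ≤ M) (hu : ∀ p, |u p| ≤ M) :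
    |∑ p, b p * u p * c p| ≤ M * Real.sqrt (∑ p, c p ^ 2) := by
  apply abs_le_mul_sqrt hM (Finset.sum_nonneg fun p _ => sq_nonneg _)
  calc (∑ p, b p * u p * c p) ^ 2 = (∑ p, b p * (u p * c p)) ^ 2 := by
        congr 1; exact Finset.sum_congr rfl fun p _ => by ring
    _ ≤ (∑ p, b p ^ 2) * (∑ p, (u p * c p) ^ 2) :=
        Finset.sum_mul_sq_le_sq_mul_sq _ _ _
    _ = ∑ p, (u p * c p) ^ 2 := by rw [hb, one_mul]
    _ ≤ ∑ p, M ^ 2 * c p ^ 2 := by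
        apply Finset.sum_le_sum
        intro p _
        rw [mul_pow]
        apply mul_le_mul_of_nonneg_right _ (sq_nonneg _)
        calc u p ^ 2 = |u p| ^ 2 := (sq_abs _).symm
          _ ≤ M ^ 2 := by
              apply pow_le_pow_left₀ (abs_nonneg _) (hu p)
    _ = M ^ 2 * ∑ p, c p ^ 2 := by rw [Finset.mul_sum]

end FDH
open Matrix

/-- The Frobenius norm of a real square matrix. -/
noncomputable def frobNorm {n : ℕ} (M : Matrix (Fin n) (Fin n) ℝ) : ℝ :=
  Real.sqrt (∑ i, ∑ j, (M i j) ^ 2)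

/-- The Hessian matrix of `f` at `x`, with entries the second partial derivatives. -/
noncomputable def hess {n : ℕ} (f : (Fin n → ℝ) → ℝ) (x : Fin n → ℝ) :
    Matrix (Fin n) (Fin n) ℝ :=
  Matrix.of fun i j => iteratedFDeriv ℝ 2 f x ![Pi.single i 1, Pi.single j 1]

/-- The second-order finite difference approximation of the Hessian of `f` at `x`
with step-size `ε`. -/
noncomputable def finDiff2 {n : ℕ} (f : (Fin n → ℝ) → ℝ) (ε : ℝ) (x : Fin n → ℝ) :
    Matrix (Fin n) (Fin n) ℝ :=
  Matrix.of fun i j =>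
    (f (x + ε • (Pi.single i 1 : Fin n → ℝ) + ε • (Pi.single j 1 : Fin n → ℝ)) - f (x + ε • (Pi.single i 1 : Fin n → ℝ))
      - f (x + ε • (Pi.single j 1 : Fin n → ℝ)) + f x) / ε ^ 2

/-- finite difference approximation error of the Hessian of a two-hidden-layer
network, uniformly over the closed unit ball. -/
theorem finite_difference_hessian_bound
    (m0 m1 : ℕ) (hm0 : 0 < m0) (hm1 : 0 < m1)
    (a : Fin m0 → Fin m0 → ℝ) (b : Fin m1 → Fin m0 → ℝ)
    (ha : ∀ i, ∑ k, a i k ^ 2 = 1) (hb : ∀ ℓ, ∑ i, b ℓ i ^ 2 = 1)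
    (g : Fin m0 → ℝ → ℝ) (h : Fin m1 → ℝ → ℝ)
    (hg : ∀ i, ContDiff ℝ 3 (g i)) (hh : ∀ ℓ, ContDiff ℝ 3 (h ℓ))
    (κ η : ℕ → ℝ)
    (hgb : ∀ i, ∀ k ≤ 3, ∀ t : ℝ, |iteratedDeriv k (g i) t| ≤ κ k)
    (hhb : ∀ ℓ, ∀ k ≤ 3, ∀ t : ℝ, |iteratedDeriv k (h ℓ) t| ≤ η k)
    (f : (Fin m0 → ℝ) → ℝ)
    (hf : ∀ x, f x = ∑ ℓ, h ℓ (∑ i, b ℓ i * g i (∑ k, a i k * x k)))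
    (ε : ℝ) (hε : 0 < ε)
    (CΔ : ℝ)
    (hC : CΔ = 16 * max (max (η 2 * κ 1 * κ 2) (κ 1 ^ 3 * η 3)) (η 1 * κ 3)) :
    ∀ x : Fin m0 → ℝ, (∑ k, x k ^ 2) ≤ 1 →
      frobNorm (hess f x - finDiff2 f ε x) ≤ CΔ * ε * m1 * (m0 : ℝ) ^ ((3 : ℝ) / 2) := by
  intro x _
  open FDH in
  -- the network as a sum of compositions
  have hfun : f = fun y => ∑ ℓ, h ℓ (FDH.zf a b g ℓ y) := by
    funext y
    rw [hf y]
    simp [FDH.zf, FDH.lin]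
  rw [hfun]
  set F : (Fin m0 → ℝ) → ℝ := fun y => ∑ ℓ, h ℓ (FDH.zf a b g ℓ y) with hF
  -- derivative bounds in `deriv` form
  have hg1 : ∀ p s, |deriv (g p) s| ≤ κ 1 := fun p s => by
    have := hgb p 1 (by norm_num) s; rwa [iteratedDeriv_one] at this
  have hg2 : ∀ p s, |deriv (deriv (g p)) s| ≤ κ 2 := fun p s => by
    have := hgb p 2 (by norm_num) s; rwa [FDH.iteratedDeriv_two] at this
  have hg3 : ∀ p s, |deriv (deriv (deriv (g p))) s| ≤ κ 3 := fun p s => by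
    have := hgb p 3 (by norm_num) s; rwa [FDH.iteratedDeriv_three] at this
  have hh1 : ∀ ℓ s, |deriv (h ℓ) s| ≤ η 1 := fun ℓ s => by
    have := hhb ℓ 1 (by norm_num) s; rwa [iteratedDeriv_one] at this
  have hh2 : ∀ ℓ s, |deriv (deriv (h ℓ)) s| ≤ η 2 := fun ℓ s => by
    have := hhb ℓ 2 (by norm_num) s; rwa [FDH.iteratedDeriv_two] at this
  have hh3 : ∀ ℓ s, |deriv (deriv (deriv (h ℓ))) s| ≤ η 3 := fun ℓ s => by
    have := hhb ℓ 3 (by norm_num) s; rwa [FDH.iteratedDeriv_three] at this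
  have hκ1 : 0 ≤ κ 1 := (abs_nonneg _).trans (hg1 ⟨0, hm0⟩ 0)
  have hκ2 : 0 ≤ κ 2 := (abs_nonneg _).trans (hg2 ⟨0, hm0⟩ 0)
  have hκ3 : 0 ≤ κ 3 := (abs_nonneg _).trans (hg3 ⟨0, hm0⟩ 0)
  have hη1 : 0 ≤ η 1 := (abs_nonneg _).trans (hh1 ⟨0, hm1⟩ 0)
  have hη2 : 0 ≤ η 2 := (abs_nonneg _).trans (hh2 ⟨0, hm1⟩ 0)
  have hη3 : 0 ≤ η 3 := (abs_nonneg _).trans (hh3 ⟨0, hm1⟩ 0)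
  -- column norms
  set S : Fin m0 → ℝ := fun i => ∑ p, a p i ^ 2 with hSdef
  set sA : Fin m0 → ℝ := fun i => Real.sqrt (S i) with hsAdef
  have hSnn : ∀ i, 0 ≤ S i := fun i => Finset.sum_nonneg fun p _ => sq_nonneg _
  have hsAnn : ∀ i, 0 ≤ sA i := fun i => Real.sqrt_nonneg _
  have haS : ∀ p i, a p i ^ 2 ≤ 1 := fun p i => by
    calc a p i ^ 2 ≤ ∑ k, a p k ^ 2 :=
          Finset.single_le_sum (f := fun k => a p k ^ 2) (fun k _ => sq_nonneg _) (Finset.mem_univ i)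
      _ = 1 := ha p
  have hS_le : ∀ i, S i ≤ (m0 : ℝ) := fun i => by
    calc S i ≤ ∑ _p : Fin m0, (1:ℝ) := Finset.sum_le_sum fun p _ => haS p i
      _ = (m0 : ℝ) := by simp
  have hm0nn : (0:ℝ) ≤ (m0:ℝ) := Nat.cast_nonneg _
  have hsA_le : ∀ i, sA i ≤ Real.sqrt m0 := fun i => Real.sqrt_le_sqrt (hS_le i)
  have h1m0 : (1:ℝ) ≤ Real.sqrt m0 := by
    rw [show (1:ℝ) = Real.sqrt 1 by simp]
    exact Real.sqrt_le_sqrt (by exact_mod_cast hm0)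
  have hm0s : (0:ℝ) ≤ Real.sqrt m0 := Real.sqrt_nonneg _
  -- bounds on the building blocks
  have hP : ∀ (i : Fin m0) (ℓ : Fin m1) (y : Fin m0 → ℝ),
      |FDH.Pf a b g i ℓ y| ≤ κ 1 * sA i := by
    intro i ℓ y
    exact FDH.abs_wsum_le (b ℓ) (fun p => deriv (g p) (FDH.lin a p y)) (fun p => a p i)
      (κ 1) (hb ℓ) hκ1 (fun p => hg1 p _)
  have hPm : ∀ (i : Fin m0) (ℓ : Fin m1) (y : Fin m0 → ℝ),
      |FDH.Pf a b g i ℓ y| ≤ κ 1 * Real.sqrt m0 := fun i ℓ y =>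
    (hP i ℓ y).trans (mul_le_mul_of_nonneg_left (hsA_le i) hκ1)
  have hQ : ∀ (i j : Fin m0) (ℓ : Fin m1) (y : Fin m0 → ℝ),
      |FDH.Qf a b g i j ℓ y| ≤ κ 2 * (sA i * sA j) := by
    intro i j ℓ y
    have h0 := FDH.abs_wsum_le (b ℓ) (fun p => deriv (deriv (g p)) (FDH.lin a p y))
      (fun p => a p i * a p j) (κ 2) (hb ℓ) hκ2 (fun p => hg2 p _)
    refine h0.trans (mul_le_mul_of_nonneg_left ?_ hκ2)
    have hsum : ∑ p, (a p i * a p j) ^ 2 ≤ S i * S j := by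
      calc ∑ p, (a p i * a p j) ^ 2 = ∑ p, a p i ^ 2 * a p j ^ 2 := by
            exact Finset.sum_congr rfl fun p _ => by ring
        _ ≤ S i * S j := FDH.sum_mul_le_sum_mul _ _ _
            (fun p _ => sq_nonneg _) (fun p _ => sq_nonneg _)
    calc Real.sqrt (∑ p, (a p i * a p j) ^ 2) ≤ Real.sqrt (S i * S j) :=
          Real.sqrt_le_sqrt hsum
      _ = sA i * sA j := Real.sqrt_mul (hSnn i) _
  have hQm : ∀ (i j : Fin m0) (ℓ : Fin m1) (y : Fin m0 → ℝ),
      |FDH.Qf a b g i j ℓ y| ≤ κ 2 * (Real.sqrt m0 * sA j) := by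
    intro i j ℓ y
    refine (hQ i j ℓ y).trans (mul_le_mul_of_nonneg_left ?_ hκ2)
    exact mul_le_mul_of_nonneg_right (hsA_le i) (hsAnn j)
  have hR : ∀ (i j w : Fin m0) (ℓ : Fin m1) (y : Fin m0 → ℝ),
      |FDH.Rf a b g i j w ℓ y| ≤ κ 3 * (sA i * sA j) := by
    intro i j w ℓ y
    have h0 := FDH.abs_wsum_le (b ℓ) (fun p => deriv (deriv (deriv (g p))) (FDH.lin a p y))
      (fun p => a p w * (a p i * a p j)) (κ 3) (hb ℓ) hκ3 (fun p => hg3 p _)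
    refine h0.trans (mul_le_mul_of_nonneg_left ?_ hκ3)
    have hsum : ∑ p, (a p w * (a p i * a p j)) ^ 2 ≤ S i * S j := by
      calc ∑ p, (a p w * (a p i * a p j)) ^ 2
          = ∑ p, a p w ^ 2 * (a p i ^ 2 * a p j ^ 2) := by
            exact Finset.sum_congr rfl fun p _ => by ring
        _ ≤ ∑ p, a p i ^ 2 * a p j ^ 2 := by
            apply Finset.sum_le_sum
            intro p _
            exact mul_le_of_le_one_left (mul_nonneg (sq_nonneg _) (sq_nonneg _)) (haS p w)
        _ ≤ S i * S j := FDH.sum_mul_le_sum_mul _ _ _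
            (fun p _ => sq_nonneg _) (fun p _ => sq_nonneg _)
    calc Real.sqrt (∑ p, (a p w * (a p i * a p j)) ^ 2) ≤ Real.sqrt (S i * S j) :=
          Real.sqrt_le_sqrt hsum
      _ = sA i * sA j := Real.sqrt_mul (hSnn i) _
  -- the third-derivative bound
  set C5 : ℝ := κ 1 ^ 3 * η 3 + 3 * (η 2 * κ 1 * κ 2) + η 1 * κ 3 with hC5
  set TB : Fin m0 → Fin m0 → ℝ :=
    fun i j => (m1 : ℝ) * (C5 * (Real.sqrt m0 * (sA i * sA j))) with hTB
  have hTf : ∀ (i j w : Fin m0) (y : Fin m0 → ℝ), |FDH.Tf a b g h i j w y| ≤ TB i j := by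
    intro i j w y
    have perl : ∀ ℓ : Fin m1,
        |deriv (deriv (deriv (h ℓ))) (FDH.zf a b g ℓ y) * FDH.Pf a b g w ℓ y * FDH.Pf a b g i ℓ y
            * FDH.Pf a b g j ℓ y
          + deriv (deriv (h ℓ)) (FDH.zf a b g ℓ y)
              * (FDH.Qf a b g w i ℓ y * FDH.Pf a b g j ℓ y
                  + FDH.Pf a b g i ℓ y * FDH.Qf a b g w j ℓ y)
          + deriv (deriv (h ℓ)) (FDH.zf a b g ℓ y) * FDH.Pf a b g w ℓ y * FDH.Qf a b g i j ℓ y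
          + deriv (h ℓ) (FDH.zf a b g ℓ y) * FDH.Rf a b g i j w ℓ y|
        ≤ C5 * (Real.sqrt m0 * (sA i * sA j)) := by
      intro ℓ
      have bA : |deriv (deriv (deriv (h ℓ))) (FDH.zf a b g ℓ y) * FDH.Pf a b g w ℓ y
          * FDH.Pf a b g i ℓ y * FDH.Pf a b g j ℓ y|
          ≤ η 3 * (κ 1 * Real.sqrt m0) * (κ 1 * sA i) * (κ 1 * sA j) :=
        FDH.abs_mul_le_of_le (FDH.abs_mul_le_of_le (FDH.abs_mul_le_of_le (hh3 ℓ _)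
          (hPm w ℓ y)) (hP i ℓ y)) (hP j ℓ y)
      have bB : |deriv (deriv (h ℓ)) (FDH.zf a b g ℓ y)
          * (FDH.Qf a b g w i ℓ y * FDH.Pf a b g j ℓ y
              + FDH.Pf a b g i ℓ y * FDH.Qf a b g w j ℓ y)|
          ≤ η 2 * ((κ 2 * (Real.sqrt m0 * sA i)) * (κ 1 * sA j)
              + (κ 1 * sA i) * (κ 2 * (Real.sqrt m0 * sA j))) := by
        apply FDH.abs_mul_le_of_le (hh2 ℓ _)
        calc |FDH.Qf a b g w i ℓ y * FDH.Pf a b g j ℓ y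
              + FDH.Pf a b g i ℓ y * FDH.Qf a b g w j ℓ y|
            ≤ |FDH.Qf a b g w i ℓ y * FDH.Pf a b g j ℓ y|
              + |FDH.Pf a b g i ℓ y * FDH.Qf a b g w j ℓ y| := abs_add_le _ _
          _ ≤ (κ 2 * (Real.sqrt m0 * sA i)) * (κ 1 * sA j)
              + (κ 1 * sA i) * (κ 2 * (Real.sqrt m0 * sA j)) :=
            add_le_add (FDH.abs_mul_le_of_le (hQm w i ℓ y) (hP j ℓ y))
              (FDH.abs_mul_le_of_le (hP i ℓ y) (hQm w j ℓ y))
      have bC : |deriv (deriv (h ℓ)) (FDH.zf a b g ℓ y) * FDH.Pf a b g w ℓ y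
          * FDH.Qf a b g i j ℓ y|
          ≤ η 2 * (κ 1 * Real.sqrt m0) * (κ 2 * (sA i * sA j)) :=
        FDH.abs_mul_le_of_le (FDH.abs_mul_le_of_le (hh2 ℓ _) (hPm w ℓ y)) (hQ i j ℓ y)
      have bD : |deriv (h ℓ) (FDH.zf a b g ℓ y) * FDH.Rf a b g i j w ℓ y|
          ≤ η 1 * (κ 3 * (sA i * sA j)) :=
        FDH.abs_mul_le_of_le (hh1 ℓ _) (hR i j w ℓ y)
      have habs4 : ∀ A B C D : ℝ, |A + B + C + D| ≤ |A| + |B| + |C| + |D| := by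
        intro A B C D
        have h1 := abs_add_le (A + B + C) D
        have h2 := abs_add_le (A + B) C
        have h3 := abs_add_le A B
        linarith
      have key : (η 1 * (κ 3 * (sA i * sA j))) * 1
          ≤ (η 1 * (κ 3 * (sA i * sA j))) * Real.sqrt m0 :=
        mul_le_mul_of_nonneg_left h1m0
          (mul_nonneg hη1 (mul_nonneg hκ3 (mul_nonneg (hsAnn i) (hsAnn j))))
      calc _ ≤ _ := habs4 _ _ _ _
        _ ≤ η 3 * (κ 1 * Real.sqrt m0) * (κ 1 * sA i) * (κ 1 * sA j)
            + η 2 * ((κ 2 * (Real.sqrt m0 * sA i)) * (κ 1 * sA j)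
                + (κ 1 * sA i) * (κ 2 * (Real.sqrt m0 * sA j)))
            + η 2 * (κ 1 * Real.sqrt m0) * (κ 2 * (sA i * sA j))
            + η 1 * (κ 3 * (sA i * sA j)) := by linarith
        _ ≤ C5 * (Real.sqrt m0 * (sA i * sA j)) := by rw [hC5]; nlinarith [key]
    calc |FDH.Tf a b g h i j w y|
        ≤ ∑ ℓ : Fin m1, |deriv (deriv (deriv (h ℓ))) (FDH.zf a b g ℓ y) * FDH.Pf a b g w ℓ y
            * FDH.Pf a b g i ℓ y * FDH.Pf a b g j ℓ y
          + deriv (deriv (h ℓ)) (FDH.zf a b g ℓ y)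
              * (FDH.Qf a b g w i ℓ y * FDH.Pf a b g j ℓ y
                  + FDH.Pf a b g i ℓ y * FDH.Qf a b g w j ℓ y)
          + deriv (deriv (h ℓ)) (FDH.zf a b g ℓ y) * FDH.Pf a b g w ℓ y * FDH.Qf a b g i j ℓ y
          + deriv (h ℓ) (FDH.zf a b g ℓ y) * FDH.Rf a b g i j w ℓ y| :=
          Finset.abs_sum_le_sum_abs _ _
      _ ≤ ∑ _ℓ : Fin m1, C5 * (Real.sqrt m0 * (sA i * sA j)) :=
          Finset.sum_le_sum fun ℓ _ => perl ℓ
      _ = TB i j := by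
          rw [Finset.sum_const, Finset.card_univ, Fintype.card_fin, nsmul_eq_mul, hTB]
  have hTBnn : ∀ i j, 0 ≤ TB i j := fun i j =>
    (abs_nonneg _).trans (hTf i j i x)
  -- difference of Hf along a coordinate step, via the mean value theorem
  have hHd : ∀ (y : Fin m0 → ℝ) (w i j : Fin m0) (Δ : ℝ), 0 < Δ → Δ ≤ ε →
      |FDH.Hf a b g h i j (y + Δ • FDH.ew w) - FDH.Hf a b g h i j y| ≤ ε * TB i j := by
    intro y w i j Δ hΔ hΔε
    have hder : ∀ t : ℝ, HasDerivAt (fun t : ℝ => FDH.Hf a b g h i j (y + t • FDH.ew w))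
        (FDH.Tf a b g h i j w (y + t • FDH.ew w)) t := fun t =>
      FDH.hasDerivAt_Hf_line a b g h hg hh i j y w t
    obtain ⟨c, _, hceq⟩ := exists_hasDerivAt_eq_slope
      (fun t : ℝ => FDH.Hf a b g h i j (y + t • FDH.ew w))
      (fun t : ℝ => FDH.Tf a b g h i j w (y + t • FDH.ew w)) hΔ
      (fun t _ => (hder t).continuousAt.continuousWithinAt)
      (fun t _ => hder t)
    simp only [zero_smul, add_zero, sub_zero] at hceq
    rw [eq_div_iff (ne_of_gt hΔ)] at hceq
    have heq : FDH.Hf a b g h i j (y + Δ • FDH.ew w) - FDH.Hf a b g h i j y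
        = Δ * FDH.Tf a b g h i j w (y + c • FDH.ew w) := by linarith
    rw [heq, abs_mul, abs_of_pos hΔ]
    exact mul_le_mul hΔε (hTf i j w _) (abs_nonneg _) hε.le
  -- the finite difference is an exact Hessian value at an intermediate point
  have hFD : ∀ i j : Fin m0, ∃ ξ ∈ Set.Ioo (0:ℝ) ε, ∃ τ ∈ Set.Ioo (0:ℝ) ε,
      finDiff2 F ε x i j = FDH.Hf a b g h i j ((x + ξ • FDH.ew i) + τ • FDH.ew j) := by
    intro i j
    set y1 : Fin m0 → ℝ := x + ε • FDH.ew j with hy1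
    have hq : ∀ t : ℝ, HasDerivAt
        (fun t : ℝ => (∑ ℓ, h ℓ (FDH.zf a b g ℓ (y1 + t • FDH.ew i)))
          - ∑ ℓ, h ℓ (FDH.zf a b g ℓ (x + t • FDH.ew i)))
        (FDH.Df a b g h i (y1 + t • FDH.ew i) - FDH.Df a b g h i (x + t • FDH.ew i)) t :=
      fun t => (FDH.hasDerivAt_f_line a b g h hg hh y1 i t).sub
        (FDH.hasDerivAt_f_line a b g h hg hh x i t)
    obtain ⟨ξ, hξ, hξeq⟩ := exists_hasDerivAt_eq_slope _ _ hε
      (fun t _ => (hq t).continuousAt.continuousWithinAt) (fun t _ => hq t)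
    have hr : ∀ t : ℝ, HasDerivAt
        (fun t : ℝ => FDH.Df a b g h i ((x + ξ • FDH.ew i) + t • FDH.ew j))
        (FDH.Hf a b g h j i ((x + ξ • FDH.ew i) + t • FDH.ew j)) t :=
      fun t => FDH.hasDerivAt_Df_line a b g h hg hh i (x + ξ • FDH.ew i) j t
    obtain ⟨τ, hτ, hτeq⟩ := exists_hasDerivAt_eq_slope _ _ hε
      (fun t _ => (hr t).continuousAt.continuousWithinAt) (fun t _ => hr t)
    refine ⟨ξ, hξ, τ, hτ, ?_⟩
    simp only [zero_smul, add_zero, sub_zero] at hξeq hτeq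
    rw [eq_div_iff (ne_of_gt hε)] at hξeq hτeq
    have hv : y1 + ξ • FDH.ew i = (x + ξ • FDH.ew i) + ε • FDH.ew j := by
      rw [hy1, add_right_comm]
    rw [← hv] at hτeq
    have hv2 : x + ε • FDH.ew i + ε • FDH.ew j = y1 + ε • FDH.ew i := by
      rw [hy1, add_right_comm]
    have hent : finDiff2 F ε x i j
        = ((∑ ℓ, h ℓ (FDH.zf a b g ℓ (y1 + ε • FDH.ew i)))
            - (∑ ℓ, h ℓ (FDH.zf a b g ℓ (x + ε • FDH.ew i)))
            - (∑ ℓ, h ℓ (FDH.zf a b g ℓ y1)) + ∑ ℓ, h ℓ (FDH.zf a b g ℓ x)) / ε ^ 2 := by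
      rw [hF]
      show ((fun y => ∑ ℓ, h ℓ (FDH.zf a b g ℓ y)) (x + ε • (Pi.single i 1 : Fin m0 → ℝ)
            + ε • (Pi.single j 1 : Fin m0 → ℝ)) - _ - _ + _) / ε ^ 2 = _
      rw [show (Pi.single i 1 : Fin m0 → ℝ) = FDH.ew i from rfl,
        show (Pi.single j 1 : Fin m0 → ℝ) = FDH.ew j from rfl, hv2, ← hy1]
    rw [hent, FDH.Hf_symm]
    rw [div_eq_iff (by positivity : (ε:ℝ) ^ 2 ≠ 0)]
    nlinarith [hξeq, hτeq]
  -- the Hessian entries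
  have hHess : ∀ i j : Fin m0, hess F x i j = FDH.Hf a b g h i j x := by
    intro i j
    have hFd : fderiv ℝ F = fun y => FDH.D1 a b g h y := by
      funext y
      rw [hF]
      exact (FDH.hasFDerivAt_f a b g h hg hh y).fderiv
    have h2 : fderiv ℝ (fderiv ℝ F) x = FDH.D2 a b g h x := by
      rw [hFd]
      exact (FDH.hasFDerivAt_D1 a b g h hg hh x).fderiv
    show iteratedFDeriv ℝ 2 F x ![Pi.single i 1, Pi.single j 1] = _
    rw [iteratedFDeriv_two_apply, h2]
    simp only [Matrix.cons_val_zero, Matrix.cons_val_one, Matrix.head_cons]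
    rw [show (Pi.single i 1 : Fin m0 → ℝ) = FDH.ew i from rfl,
      show (Pi.single j 1 : Fin m0 → ℝ) = FDH.ew j from rfl]
    exact FDH.D2_apply a b g h x i j
  -- entrywise bound
  have hEntry : ∀ i j : Fin m0,
      |hess F x i j - finDiff2 F ε x i j| ≤ 2 * (ε * TB i j) := by
    intro i j
    obtain ⟨ξ, hξ, τ, hτ, hFDe⟩ := hFD i j
    rw [hHess i j, hFDe]
    have hsplit : |FDH.Hf a b g h i j x - FDH.Hf a b g h i j ((x + ξ • FDH.ew i) + τ • FDH.ew j)|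
        ≤ |FDH.Hf a b g h i j x - FDH.Hf a b g h i j (x + ξ • FDH.ew i)|
          + |FDH.Hf a b g h i j (x + ξ • FDH.ew i)
              - FDH.Hf a b g h i j ((x + ξ • FDH.ew i) + τ • FDH.ew j)| :=
      abs_sub_le _ _ _
    refine hsplit.trans ?_
    have e1 : |FDH.Hf a b g h i j x - FDH.Hf a b g h i j (x + ξ • FDH.ew i)| ≤ ε * TB i j := by
      rw [abs_sub_comm]
      exact hHd x i i j ξ hξ.1 hξ.2.le
    have e2 : |FDH.Hf a b g h i j (x + ξ • FDH.ew i)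
        - FDH.Hf a b g h i j ((x + ξ • FDH.ew i) + τ • FDH.ew j)| ≤ ε * TB i j := by
      rw [abs_sub_comm]
      exact hHd (x + ξ • FDH.ew i) j i j τ hτ.1 hτ.2.le
    linarith
  -- assemble the Frobenius norm bound
  have hC5nn : 0 ≤ C5 := by
    rw [hC5]
    have := mul_nonneg (pow_nonneg hκ1 3) hη3
    have := mul_nonneg (mul_nonneg hη2 hκ1) hκ2
    have := mul_nonneg hη1 hκ3
    linarith
  have hSsum : ∑ i, S i = (m0:ℝ) := by
    calc ∑ i, S i = ∑ i : Fin m0, ∑ p, a p i ^ 2 := rfl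
      _ = ∑ p : Fin m0, ∑ i, a p i ^ 2 := Finset.sum_comm
      _ = ∑ _p : Fin m0, (1:ℝ) := Finset.sum_congr rfl fun p _ => ha p
      _ = (m0:ℝ) := by simp
  have hpt : ∀ i j : Fin m0, (2*(ε*TB i j))^2
      = ((2*ε*(m1:ℝ)*C5)^2 * (m0:ℝ)) * (S i * S j) := by
    intro i j
    have e1 : (Real.sqrt m0)^2 = (m0:ℝ) := Real.sq_sqrt hm0nn
    have e2 : (sA i)^2 = S i := Real.sq_sqrt (hSnn i)
    have e3 : (sA j)^2 = S j := Real.sq_sqrt (hSnn j)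
    calc (2*(ε*TB i j))^2
        = (2*ε*(m1:ℝ)*C5)^2 * ((Real.sqrt m0)^2 * ((sA i)^2 * (sA j)^2)) := by
          rw [hTB]; ring
      _ = ((2*ε*(m1:ℝ)*C5)^2 * (m0:ℝ)) * (S i * S j) := by rw [e1, e2, e3]; ring
  have hK'nn : (0:ℝ) ≤ 2*ε*(m1:ℝ)*C5*Real.sqrt m0*(m0:ℝ) := by positivity
  have hsum : ∑ i, ∑ j, ((hess F x - finDiff2 F ε x) i j)^2
      ≤ (2*ε*(m1:ℝ)*C5*Real.sqrt m0*(m0:ℝ))^2 := by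
    have step1 : ∑ i, ∑ j, ((hess F x - finDiff2 F ε x) i j)^2
        ≤ ∑ i, ∑ j, (2*(ε*TB i j))^2 := by
      apply Finset.sum_le_sum
      intro i _
      apply Finset.sum_le_sum
      intro j _
      rw [Matrix.sub_apply, ← sq_abs]
      exact pow_le_pow_left₀ (abs_nonneg _) (hEntry i j) 2
    refine step1.trans ?_
    have step2 : ∑ i, ∑ j, (2*(ε*TB i j))^2
        = ((2*ε*(m1:ℝ)*C5)^2 * (m0:ℝ)) * ((∑ i, S i) * (∑ j, S j)) := by
      rw [Finset.sum_mul_sum, Finset.mul_sum]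
      apply Finset.sum_congr rfl
      intro i _
      rw [Finset.mul_sum]
      exact Finset.sum_congr rfl fun j _ => hpt i j
    rw [step2, hSsum]
    have e1 : (Real.sqrt m0)^2 = (m0:ℝ) := Real.sq_sqrt hm0nn
    apply le_of_eq
    linear_combination (-((2*ε*(m1:ℝ)*C5)^2*(m0:ℝ)*(m0:ℝ))) * e1
  have hfro : frobNorm (hess F x - finDiff2 F ε x) ≤ 2*ε*(m1:ℝ)*C5*Real.sqrt m0*(m0:ℝ) := by
    calc frobNorm (hess F x - finDiff2 F ε x)
        ≤ Real.sqrt ((2*ε*(m1:ℝ)*C5*Real.sqrt m0*(m0:ℝ))^2) := Real.sqrt_le_sqrt hsum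
      _ = 2*ε*(m1:ℝ)*C5*Real.sqrt m0*(m0:ℝ) := Real.sqrt_sq hK'nn
  have h2C5 : 2*C5 ≤ CΔ := by
    rw [hC, hC5]
    have hMa : η 2*κ 1*κ 2 ≤ max (max (η 2*κ 1*κ 2) (κ 1^3*η 3)) (η 1*κ 3) :=
      le_trans (le_max_left _ _) (le_max_left _ _)
    have hMb : κ 1^3*η 3 ≤ max (max (η 2*κ 1*κ 2) (κ 1^3*η 3)) (η 1*κ 3) :=
      le_trans (le_max_right _ _) (le_max_left _ _)
    have hMc : η 1*κ 3 ≤ max (max (η 2*κ 1*κ 2) (κ 1^3*η 3)) (η 1*κ 3) := le_max_right _ _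
    linarith
  have hm0pos : (0:ℝ) < (m0:ℝ) := by exact_mod_cast hm0
  have hpow : ((m0:ℝ)) ^ ((3:ℝ)/2) = (m0:ℝ) * Real.sqrt m0 := by
    rw [show (3:ℝ)/2 = 1 + 1/(2:ℝ) by norm_num, Real.rpow_add hm0pos, Real.rpow_one,
      ← Real.sqrt_eq_rpow]
  calc frobNorm (hess F x - finDiff2 F ε x) ≤ 2*ε*(m1:ℝ)*C5*Real.sqrt m0*(m0:ℝ) := hfro
    _ = (2*C5)*(ε*(m1:ℝ)*(Real.sqrt m0*(m0:ℝ))) := by ring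
    _ ≤ CΔ*(ε*(m1:ℝ)*(Real.sqrt m0*(m0:ℝ))) := by
        apply mul_le_mul_of_nonneg_right h2C5
        positivity
    _ = CΔ * ε * m1 * ((m0:ℝ)) ^ ((3:ℝ)/2) := by rw [hpow]; ring
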